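/- arXiv:2002.06672 — 12 statements merged into one kernel-verified Lean document; each statement's English description precedes it below -/
import Mathlib

section
/- For all polynomials a₁, b₁, a₂, b₂ in ℤ[x], writing p = (a₁,b₁), q = (a₂,b₂), one has x·(x² − 1) · N(p ⊕ q) = (N(p)·N(q) + D(p)·D(q))·x − (D(p)·N(q) + N(p)·D(q)). -/
open Polynomial

/-- Sum of bracket pairs: (a₁,b₁) ⊕ (a₂,b₂) = (a₁a₂, a₁b₂ + b₁a₂ + x·b₁b₂). -/
noncomputable def bpSum (p q : ℤ[X] × ℤ[X]) : ℤ[X] × ℤ[X] :=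
  (p.1 * q.1, p.1 * q.2 + p.2 * q.1 + X * (p.2 * q.2))

/-- n-th ⊕-power of a bracket pair. -/
noncomputable def bpPow (p : ℤ[X] × ℤ[X]) : ℕ → ℤ[X] × ℤ[X]
  | 0 => (1, 0)
  | n + 1 => bpSum p (bpPow p n)

/-- Denominator closure polynomial D(a,b) = x·a + x²·b. -/
noncomputable def bpD (p : ℤ[X] × ℤ[X]) : ℤ[X] := X * p.1 + X ^ 2 * p.2

/-- Numerator closure polynomial N(a,b) = x²·a + x·b. -/
noncomputable def bpN (p : ℤ[X] × ℤ[X]) : ℤ[X] := X ^ 2 * p.1 + X * p.2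

/-- R-closure polynomial R(a,b) = N(a,b) + D(a,b). -/
noncomputable def bpR (p : ℤ[X] × ℤ[X]) : ℤ[X] := bpN p + bpD p

theorem bpN_sum (a₁ b₁ a₂ b₂ : ℤ[X]) :
    X * (X ^ 2 - 1) * bpN (bpSum (a₁, b₁) (a₂, b₂)) =
      (bpN (a₁, b₁) * bpN (a₂, b₂) + bpD (a₁, b₁) * bpD (a₂, b₂)) * X -
        (bpD (a₁, b₁) * bpN (a₂, b₂) + bpN (a₁, b₁) * bpD (a₂, b₂)) := by simp only [bpN, bpD, bpSum]; ring
end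

section
/- For all polynomials a₁, b₁, a₂, b₂ in ℤ[x], writing p = (a₁,b₁), q = (a₂,b₂), one has x·(x² − 1) · R(p ⊕ q) = D(p)·D(q)·x² + (N(p)·N(q) + D(p)·D(q))·x − (D(p)·N(q) + N(p)·D(q) + D(p)·D(q)). -/
open Polynomial

theorem bpR_sum (a₁ b₁ a₂ b₂ : ℤ[X]) :
    X * (X ^ 2 - 1) * bpR (bpSum (a₁, b₁) (a₂, b₂)) =
      bpD (a₁, b₁) * bpD (a₂, b₂) * X ^ 2 +
        (bpN (a₁, b₁) * bpN (a₂, b₂) + bpD (a₁, b₁) * bpD (a₂, b₂)) * X -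
        (bpD (a₁, b₁) * bpN (a₂, b₂) + bpN (a₁, b₁) * bpD (a₂, b₂) +
          bpD (a₁, b₁) * bpD (a₂, b₂)) := by
  simp only [bpR, bpN, bpD, bpSum]
  ring
end

section
/- For all polynomials a, b in ℤ[x] and every natural number n, the n-th ⊕-power of the bracket pair (a,b) is the pair (aₙ, bₙ) with aₙ = aⁿ and x · bₙ = (a + x·b)ⁿ − aⁿ. -/
open Polynomial

theorem bpPow_formula (a b : ℤ[X]) (n : ℕ) :
    (bpPow (a, b) n).1 = a ^ n ∧
    X * (bpPow (a, b) n).2 = (a + X * b) ^ n - a ^ n := by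
  induction n with
  | zero => simp [bpPow]
  | succ n ih =>
    obtain ⟨h1, h2⟩ := ih
    constructor
    · simp [bpPow, bpSum, h1, pow_succ]; ring
    · simp only [bpPow, bpSum]
      have : X * (a * (bpPow (a, b) n).2 + b * (bpPow (a, b) n).1 +
          X * (b * (bpPow (a, b) n).2)) =
          a * (X * (bpPow (a, b) n).2) + X * b * (bpPow (a, b) n).1 +
          X * b * (X * (bpPow (a, b) n).2) := by ring
      rw [this, h1, h2, pow_succ, pow_succ]
      ring
end

section
/- For all polynomials a, b in ℤ[x] and every natural number n, the numerator closure polynomial of the n-th ⊕-power of (a,b) equals (a + x·b)ⁿ + (x² − 1)·aⁿ. -/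
open Polynomial

lemma bpPow_fst (a b : ℤ[X]) (n : ℕ) : (bpPow (a, b) n).1 = a ^ n := by
  induction n with
  | zero => simp [bpPow]
  | succ n ih => simp only [bpPow, bpSum, ih]; ring

lemma bpPow_snd (a b : ℤ[X]) (n : ℕ) :
    X * (bpPow (a, b) n).2 = (a + X * b) ^ n - a ^ n := by
  induction n with
  | zero => simp [bpPow]
  | succ n ih =>
    simp only [bpPow, bpSum, bpPow_fst]
    calc X * (a * (bpPow (a, b) n).2 + b * a ^ n + X * (b * (bpPow (a, b) n).2))
        = (a + X * b) * (X * (bpPow (a, b) n).2) + X * b * a ^ n := by ring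
      _ = (a + X * b) ^ (n + 1) - a ^ (n + 1) := by rw [ih]; ring

theorem bpN_pow (a b : ℤ[X]) (n : ℕ) :
    bpN (bpPow (a, b) n) = (a + X * b) ^ n + (X ^ 2 - 1) * a ^ n := by
  rw [bpN, bpPow_fst, bpPow_snd]; ring
end

section
/- For all polynomials a, b in ℤ[x] and every natural number n, the R-closure polynomial of the n-th ⊕-power of (a,b) equals (x + 1)·(a + x·b)ⁿ + (x² − 1)·aⁿ. -/
open Polynomial

theorem bpR_pow (a b : ℤ[X]) (n : ℕ) :
    bpR (bpPow (a, b) n) = (X + 1) * (a + X * b) ^ n + (X ^ 2 - 1) * a ^ n := by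
  have key : ∀ m : ℕ, (bpPow (a, b) m).1 = a ^ m ∧
      X * (bpPow (a, b) m).2 = (a + X * b) ^ m - a ^ m := by
    intro m
    induction m with
    | zero => simp [bpPow]
    | succ k ih =>
      obtain ⟨h1, h2⟩ := ih
      constructor
      · simp [bpPow, bpSum, h1, pow_succ, mul_comm]
      · simp only [bpPow, bpSum]
        have : X * (a * (bpPow (a, b) k).2 + b * (bpPow (a, b) k).1 +
            X * (b * (bpPow (a, b) k).2)) =
            (a + X * b) * (X * (bpPow (a, b) k).2) + X * b * (bpPow (a, b) k).1 := by
          ring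
        rw [this, h1, h2]
        ring
  obtain ⟨h1, h2⟩ := key n
  have : bpR (bpPow (a, b) n) = (X + 1) * (X * (bpPow (a, b) n).1 +
      X * (bpPow (a, b) n).2) := by
    simp only [bpR, bpN, bpD]; ring
  rw [this, h1, h2]
  ring
end

section
/- Let K be the field of fractions of ℤ[x] and let ι : ℤ[x] → K be the canonical embedding. For all polynomials a, b in ℤ[x] with a ≠ 0 and every natural number n, writing (aₙ, bₙ) for the n-th ⊕-power of (a,b), one has ι(x) · (ι(bₙ)/ι(aₙ)) = (1 + ι(x)·(ι(b)/ι(a)))ⁿ − 1. -/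
set_option synthInstance.maxHeartbeats 1000000


open Polynomial

lemma bpPow_key (a b : ℤ[X]) (n : ℕ) :
    (bpPow (a, b) n).1 + X * (bpPow (a, b) n).2 = (a + X * b) ^ n := by
  induction n with
  | zero => simp [bpPow]
  | succ n ih =>
    rw [pow_succ, ← ih]
    simp [bpPow, bpSum]
    ring

theorem bpFraction_pow (a b : ℤ[X]) (h : a ≠ 0) (n : ℕ) :
    let ι : ℤ[X] →+* FractionRing ℤ[X] := algebraMap ℤ[X] (FractionRing ℤ[X])
    ι X * (ι (bpPow (a, b) n).2 / ι (bpPow (a, b) n).1) =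
      (1 + ι X * (ι b / ι a)) ^ n - 1 := by
  intro ι
  have ha : ι a ≠ 0 := by
    simpa using (map_ne_zero_iff ι (IsFractionRing.injective _ _)).mpr h
  have han : ι (bpPow (a, b) n).1 ≠ 0 := by
    rw [bpPow_fst, map_pow]; exact pow_ne_zero _ ha
  have key : ι (bpPow (a, b) n).1 + ι X * ι (bpPow (a, b) n).2 = (ι a + ι X * ι b) ^ n := by
    rw [← map_mul, ← map_add, bpPow_key, map_pow, map_add, map_mul]
  have h2 : (1 + ι X * (ι b / ι a)) = (ι a + ι X * ι b) / ι a := by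
    field_simp
  rw [bpPow_fst, map_pow] at key
  rw [h2, div_pow, bpPow_fst, map_pow]
  have h3 : (ι a + ι X * ι b) ^ n / ι a ^ n - 1 = ((ι a + ι X * ι b) ^ n - ι a ^ n) / ι a ^ n := by
    rw [sub_div, div_self (pow_ne_zero _ ha)]
  rw [h3, mul_div_assoc', div_eq_div_iff (pow_ne_zero _ ha) (pow_ne_zero _ ha)]
  linear_combination ι a ^ n * key
end

section
/- For every natural number n, the numerator closure polynomial of the n-th ⊕-power of the bracket pair (1, 1) equals (x + 1)ⁿ + x² − 1. (This is the bracket polynomial of the numerator closure of the twist tangle [n].) -/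
open Polynomial

lemma twist_fst (n : ℕ) : (bpPow (1, 1) n).1 = 1 := by
  induction n with
  | zero => rfl
  | succ n ih =>
    show (1 : ℤ[X]) * (bpPow (1, 1) n).1 = 1
    rw [ih, mul_one]

lemma twist_snd (n : ℕ) : X * (bpPow (1, 1) n).2 = (X + 1) ^ n - 1 := by
  induction n with
  | zero => simp [bpPow]
  | succ n ih =>
    show X * ((1:ℤ[X]) * (bpPow (1, 1) n).2 + 1 * (bpPow (1, 1) n).1 + X * (1 * (bpPow (1, 1) n).2)) = _
    rw [twist_fst, pow_succ]
    linear_combination (1 + X) * ih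

theorem twist_N (n : ℕ) :
    bpN (bpPow (1, 1) n) = (X + 1) ^ n + X ^ 2 - 1 := by
  simp only [bpN, twist_fst, twist_snd, mul_one]
  ring
end

section
/- For every natural number n, the R-closure polynomial of the n-th ⊕-power of the bracket pair (1, 1) equals (x + 1)ⁿ⁺¹ + x² − 1. (This is the bracket polynomial of the R-closure of the twist tangle [n].) -/
open Polynomial

lemma bpPow_one_one (n : ℕ) :
    (bpPow (1, 1) n).1 = 1 ∧ X * (bpPow (1, 1) n).2 = (X + 1 : ℤ[X]) ^ n - 1 := by
  induction n with
  | zero => simp [bpPow]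
  | succ n ih =>
    obtain ⟨h1, h2⟩ := ih
    constructor
    · simp only [bpPow, bpSum, h1, one_mul]
    · simp only [bpPow, bpSum, h1]
      linear_combination (X + 1 : ℤ[X]) * h2

theorem twist_R (n : ℕ) :
    bpR (bpPow (1, 1) n) = (X + 1) ^ (n + 1) + X ^ 2 - 1 := by
  obtain ⟨h1, h2⟩ := bpPow_one_one n
  simp only [bpR, bpN, bpD, h1]
  have : X ^ 2 * (bpPow (1, 1) n).2 = X * ((X + 1 : ℤ[X]) ^ n - 1) := by
    rw [← h2]; ring
  rw [this]
  have : X * (bpPow (1, 1) n).2 = (X + 1 : ℤ[X]) ^ n - 1 := h2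
  rw [this, pow_succ]
  ring
end

section
/- For every natural number n, the numerator closure polynomial of the n-th ⊕-power of the bracket pair (x + 2, 1) equals (2x + 2)ⁿ + (x² − 1)·(x + 2)ⁿ. (This is the bracket polynomial of the numerator closure of the n-fold horizontal sum of the tangle 1/[2].) -/
open Polynomial

lemma inv2_aux (n : ℕ) :
    (bpPow (X + 2, 1) n).1 = (X + 2) ^ n ∧
    X * (bpPow (X + 2, 1) n).2 = (2 * X + 2) ^ n - (X + 2) ^ n := by
  induction n with
  | zero => simp [bpPow]
  | succ n ih =>
    obtain ⟨h1, h2⟩ := ih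
    constructor
    · simp only [bpPow, bpSum, h1]; ring
    · simp only [bpPow, bpSum]
      have : X * ((X + 2) * (bpPow (X + 2, 1) n).2 + 1 * (bpPow (X + 2, 1) n).1 +
          X * (1 * (bpPow (X + 2, 1) n).2)) =
          (2 * X + 2) * (X * (bpPow (X + 2, 1) n).2) + X * (bpPow (X + 2, 1) n).1 := by ring
      rw [this, h1, h2]; ring

theorem inv2_N (n : ℕ) :
    bpN (bpPow (X + 2, 1) n) = (2 * X + 2) ^ n + (X ^ 2 - 1) * (X + 2) ^ n := by
  obtain ⟨h1, h2⟩ := inv2_aux n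
  simp only [bpN, h1, h2]
  ring
end

section
/- For every natural number n, the numerator closure polynomial of the n-th ⊕-power of the bracket pair (x² + 3x + 3, 1) equals (x² + 4x + 3)ⁿ + (x² − 1)·(x² + 3x + 3)ⁿ. (This is the bracket polynomial of the numerator closure of the n-fold horizontal sum of the tangle 1/[3].) -/
open Polynomial

lemma inv3_aux (n : ℕ) :
    (bpPow (X ^ 2 + 3 * X + 3, 1) n).1 = (X ^ 2 + 3 * X + 3 : ℤ[X]) ^ n ∧
    X * (bpPow (X ^ 2 + 3 * X + 3, 1) n).2 =
      (X ^ 2 + 4 * X + 3 : ℤ[X]) ^ n - (X ^ 2 + 3 * X + 3) ^ n := by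
  induction n with
  | zero => simp [bpPow]
  | succ n ih =>
    obtain ⟨h1, h2⟩ := ih
    constructor
    · show (X ^ 2 + 3 * X + 3) * (bpPow (X ^ 2 + 3 * X + 3, 1) n).1 = _
      rw [h1, pow_succ]; ring
    · show X * ((X ^ 2 + 3 * X + 3) * (bpPow (X ^ 2 + 3 * X + 3, 1) n).2 +
        1 * (bpPow (X ^ 2 + 3 * X + 3, 1) n).1 +
        X * (1 * (bpPow (X ^ 2 + 3 * X + 3, 1) n).2)) = _
      rw [h1]
      have : X * ((X ^ 2 + 3 * X + 3) * (bpPow (X ^ 2 + 3 * X + 3, 1) n).2 +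
          1 * (X ^ 2 + 3 * X + 3 : ℤ[X]) ^ n +
          X * (1 * (bpPow (X ^ 2 + 3 * X + 3, 1) n).2)) =
          (X ^ 2 + 4 * X + 3) * (X * (bpPow (X ^ 2 + 3 * X + 3, 1) n).2) +
          X * (X ^ 2 + 3 * X + 3) ^ n := by ring
      rw [this, h2, pow_succ, pow_succ]; ring

theorem inv3_N (n : ℕ) :
    bpN (bpPow (X ^ 2 + 3 * X + 3, 1) n) =
      (X ^ 2 + 4 * X + 3) ^ n + (X ^ 2 - 1) * (X ^ 2 + 3 * X + 3) ^ n := by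
  obtain ⟨h1, h2⟩ := inv3_aux n
  unfold bpN
  rw [h1]
  have : X ^ 2 * (X ^ 2 + 3 * X + 3 : ℤ[X]) ^ n + X * (bpPow (X ^ 2 + 3 * X + 3, 1) n).2 =
      X ^ 2 * (X ^ 2 + 3 * X + 3) ^ n + (X * (bpPow (X ^ 2 + 3 * X + 3, 1) n).2) := by ring
  rw [this, h2]; ring
end

section
/- For every natural number n, the denominator closure polynomial of the n-th ⊕-power of the bracket pair (3x + 4, x² + 4x + 4) equals x·(x³ + 4x² + 7x + 4)ⁿ. (This is the bracket polynomial of the denominator closure of the n-fold horizontal sum of the tangle [2]∗[2].) -/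
open Polynomial

theorem twotwo_D (n : ℕ) :
    bpD (bpPow (3 * X + 4, X ^ 2 + 4 * X + 4) n) =
      X * (X ^ 3 + 4 * X ^ 2 + 7 * X + 4) ^ n := by
  induction n with
  | zero => simp [bpPow, bpD]
  | succ n ih =>
    have key : ∀ p q : ℤ[X] × ℤ[X], bpD (bpSum p q) = (p.1 + X * p.2) * bpD q := by
      intro p q; simp only [bpSum, bpD]; ring
    rw [bpPow, key, ih]; ring
end

section
/- For every natural number n, the denominator closure polynomial of the n-th ⊕-power of the bracket pair (x + 2, 2x² + 6x + 5) equals x·(2x³ + 6x² + 6x + 2)ⁿ. (This is the bracket polynomial of the denominator closure of the n-fold horizontal sum of the tangle [2] + 1/[2].) -/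
open Polynomial

lemma bpD_sum (p q : ℤ[X] × ℤ[X]) : (X : ℤ[X]) * bpD (bpSum p q) = bpD p * bpD q := by
  simp only [bpD, bpSum]
  ring

theorem twoPlusInv2_D (n : ℕ) :
    bpD (bpPow (X + 2, 2 * X ^ 2 + 6 * X + 5) n) =
      X * (2 * X ^ 3 + 6 * X ^ 2 + 6 * X + 2) ^ n := by
  induction n with
  | zero => simp [bpPow, bpD]
  | succ n ih =>
    have hX : (X : ℤ[X]) ≠ 0 := X_ne_zero
    apply mul_left_cancel₀ hX
    rw [show bpPow (X + 2, 2 * X ^ 2 + 6 * X + 5) (n+1) =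
        bpSum (X + 2, 2 * X ^ 2 + 6 * X + 5)
          (bpPow (X + 2, 2 * X ^ 2 + 6 * X + 5) n) from rfl,
      bpD_sum, ih]
    simp only [bpD]
    ring
end
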